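/- For probability pairs (a₁,b₁) and (a₂,b₂) of non-negative reals (each pair not both zero), the capacity penalty of a degrading merge is non-negative: Δ(a₁,b₁;a₂,b₂) = C(a₁,b₁) + C(a₂,b₂) − C(a₁+a₂, b₁+b₂) ≥ 0, where C(a,b) = −(a+b)log₂((a+b)/2) + a log₂ a + b log₂ b (with 0·log₂0 = 0). -/
import Mathlib

/-- Gibbs' pointwise inequality: `p - q ≤ p·log(p/q)` for `0 ≤ p`, `0 < q`. -/
lemma gibbs_pt (p q : ℝ) (hp : 0 ≤ p) (hq : 0 < q) : p - q ≤ p * Real.log (p / q) := by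
  rcases eq_or_lt_of_le hp with h | h
  · simp [← h]; linarith
  · have h1 : Real.log (q / p) ≤ q / p - 1 :=
      Real.log_le_sub_one_of_pos (by positivity)
    have h2 : Real.log (p / q) = - Real.log (q / p) := by
      rw [← Real.log_inv, inv_div]
    rw [h2]
    have := mul_le_mul_of_nonneg_left h1 hp
    have hq' : p * (q / p - 1) = q - p := by field_simp
    nlinarith

/-- Pointwise piece of the log-sum inequality. -/
lemma logsum_pt (a u s t : ℝ) (ha : 0 ≤ a) (hau : a ≤ u) (hs : 0 < s) (ht : 0 < t) :
    a - u * s / t ≤ (a * Real.log a - a * Real.log u) - (a * Real.log s - a * Real.log t) := by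
  rcases eq_or_lt_of_le ha with h | h
  · have hu : 0 ≤ u := le_trans ha hau
    simp [← h]
    positivity
  · have hu : 0 < u := lt_of_lt_of_le h hau
    have hq : 0 < u * s / t := by positivity
    have hg := gibbs_pt a (u * s / t) ha hq
    have hlog : Real.log (a / (u * s / t)) =
        Real.log a - Real.log u - Real.log s + Real.log t := by
      rw [Real.log_div (ne_of_gt h) (ne_of_gt hq), Real.log_div (by positivity) (ne_of_gt ht),
        Real.log_mul (ne_of_gt hu) (ne_of_gt hs)]
      ring
    rw [hlog] at hg
    nlinarith

/-- Two-term log-sum inequality. -/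
lemma logsum (a b u v : ℝ) (ha : 0 ≤ a) (hb : 0 ≤ b) (hau : a ≤ u) (hbv : b ≤ v) :
    (a + b) * Real.log (a + b) - (a + b) * Real.log (u + v) ≤
      a * Real.log a - a * Real.log u + (b * Real.log b - b * Real.log v) := by
  rcases eq_or_lt_of_le (add_nonneg ha hb) with h | hs
  · have ha0 : a = 0 := by linarith
    have hb0 : b = 0 := by linarith
    simp [ha0, hb0]
  · have ht : 0 < u + v := lt_of_lt_of_le hs (add_le_add hau hbv)
    have P1 := logsum_pt a u (a + b) (u + v) ha hau hs ht
    have P2 := logsum_pt b v (a + b) (u + v) hb hbv hs ht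
    have hsum : (a - u * (a + b) / (u + v)) + (b - v * (a + b) / (u + v)) = 0 := by
      field_simp; ring
    nlinarith [P1, P2]

/-- Capacity contribution of a probability pair `(a,b)`; `Real.logb 2 0 = 0`
implements the convention `0·log₂0 = 0`. -/
noncomputable def Cpair (a b : ℝ) : ℝ :=
  -(a + b) * Real.logb 2 (a + b) + a * Real.logb 2 a + b * Real.logb 2 b + (a + b)

/-- Capacity loss of a degrading merge of two probability pairs. -/
noncomputable def deltaMerge (a₁ b₁ a₂ b₂ : ℝ) : ℝ :=
  Cpair a₁ b₁ + Cpair a₂ b₂ - Cpair (a₁ + a₂) (b₁ + b₂)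

/-- the capacity penalty of a degrading merge is non-negative. -/
theorem deltaMerge_nonneg (a₁ b₁ a₂ b₂ : ℝ)
    (ha₁ : 0 ≤ a₁) (hb₁ : 0 ≤ b₁) (ha₂ : 0 ≤ a₂) (hb₂ : 0 ≤ b₂)
    (h₁ : 0 < a₁ + b₁) (h₂ : 0 < a₂ + b₂) :
    0 ≤ deltaMerge a₁ b₁ a₂ b₂ := by
  have hlog2 : (0:ℝ) < Real.log 2 := Real.log_pos one_lt_two
  have L1 := logsum a₁ b₁ (a₁ + a₂) (b₁ + b₂) ha₁ hb₁
    (le_add_of_nonneg_right ha₂) (le_add_of_nonneg_right hb₂)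
  have L2 := logsum a₂ b₂ (a₁ + a₂) (b₁ + b₂) ha₂ hb₂
    (le_add_of_nonneg_left ha₁) (le_add_of_nonneg_left hb₁)
  have key : deltaMerge a₁ b₁ a₂ b₂ * Real.log 2 =
      (a₁ * Real.log a₁ - a₁ * Real.log (a₁ + a₂)
        + (b₁ * Real.log b₁ - b₁ * Real.log (b₁ + b₂))
        - ((a₁ + b₁) * Real.log (a₁ + b₁)
          - (a₁ + b₁) * Real.log (a₁ + a₂ + (b₁ + b₂))))
      + (a₂ * Real.log a₂ - a₂ * Real.log (a₁ + a₂)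
        + (b₂ * Real.log b₂ - b₂ * Real.log (b₁ + b₂))
        - ((a₂ + b₂) * Real.log (a₂ + b₂)
          - (a₂ + b₂) * Real.log (a₁ + a₂ + (b₁ + b₂)))) := by
    simp only [deltaMerge, Cpair, Real.logb]
    field_simp
    ring
  have hnn : 0 ≤ deltaMerge a₁ b₁ a₂ b₂ * Real.log 2 := by
    rw [key]; linarith
  nlinarith [hnn, hlog2, mul_pos hlog2 hlog2]
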